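/- Let K be a field containing k, with char k = p > 0, and let D be a nonzero k-linear derivation of K that is p-closed, i.e. D^p = α • D for some α ∈ K^D (where D^p is the p-fold composite of D). Then the field extension K / K^D is purely inseparable of degree p, i.e. [K : K^D] = p. -/

import Mathlib

/-- The constant field `K^D` of a `k`-linear derivation `D` of a field `K`,
i.e. the subfield `{x ∈ K | D x = 0}`. -/
def constantField (k K : Type*) [Field k] [Field K] [Algebra k K]
    (D : Derivation k K K) : Subfield K where
  carrier := {x : K | D x = 0}
  one_mem' := D.map_one_eq_zero
  mul_mem' := by
    intro a b ha hb
    simp only [Set.mem_setOf_eq] at *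
    rw [D.leibniz, ha, hb, smul_zero, smul_zero, add_zero]
  zero_mem' := D.map_zero
  add_mem' := by
    intro a b ha hb
    simp only [Set.mem_setOf_eq] at *
    rw [map_add, ha, hb, add_zero]
  neg_mem' := by
    intro a ha
    simp only [Set.mem_setOf_eq] at *
    rw [map_neg, ha, neg_zero]
  inv_mem' := by
    intro a ha
    simp only [Set.mem_setOf_eq] at *
    rw [D.leibniz_inv, ha, smul_zero]

open Finset in
private lemma exists_const_relation {k K : Type*} [Field k] [Field K] [Algebra k K]
    {p : ℕ} (hp : p.Prime) (D : Derivation k K K) {α : K}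
    (hP : ∀ y : K, (⇑D)^[p] y = α * D y)
    (x : Fin (p + 1) → K) :
    ∃ g : Fin (p + 1) → K, g ≠ 0 ∧ (∀ j, D (g j) = 0) ∧ ∑ j, g j * x j = 0 := by
  classical
  set S : Set (Fin (p + 1) → K) :=
    {g | g ≠ 0 ∧ ∀ i : Fin p, ∑ j, g j * (⇑D)^[(i : ℕ)] (x j) = 0} with hSdef
  have hSne : ∃ g, g ∈ S := by
    have hw : ¬ LinearIndependent K
        (fun j : Fin (p + 1) => fun i : Fin p => (⇑D)^[(i : ℕ)] (x j)) := by
      intro h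
      have := h.fintype_card_le_finrank
      rw [Module.finrank_fin_fun, Fintype.card_fin] at this
      omega
    obtain ⟨g, hsum, i0, hi0⟩ := Fintype.not_linearIndependent_iff.mp hw
    refine ⟨g, fun h => hi0 (by rw [h]; rfl), fun i => ?_⟩
    have := congrFun hsum i
    simpa [Finset.sum_apply] using this
  set c : (Fin (p + 1) → K) → ℕ := fun g => (Finset.univ.filter fun j => g j ≠ 0).card with hcdef
  have hex : ∃ n, ∃ g ∈ S, c g = n := hSne.elim fun g hg => ⟨c g, g, hg, rfl⟩
  obtain ⟨g, hgS, hgN⟩ := Nat.find_spec hex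
  have hmin : ∀ g' ∈ S, Nat.find hex ≤ c g' := fun g' h => Nat.find_min' hex ⟨g', h, rfl⟩
  obtain ⟨j0, hj0⟩ : ∃ j, g j ≠ 0 := Function.ne_iff.mp hgS.1
  set g1 : Fin (p + 1) → K := fun j => (g j0)⁻¹ * g j with hg1def
  have hg1j0 : g1 j0 = 1 := inv_mul_cancel₀ hj0
  have hg1S : g1 ∈ S := by
    refine ⟨fun h => one_ne_zero (hg1j0 ▸ congrFun h j0), fun i => ?_⟩
    have h := hgS.2 i
    calc ∑ j, g1 j * (⇑D)^[(i : ℕ)] (x j)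
        = (g j0)⁻¹ * ∑ j, g j * (⇑D)^[(i : ℕ)] (x j) := by
          rw [Finset.mul_sum]; exact Finset.sum_congr rfl fun j _ => mul_assoc _ _ _
      _ = 0 := by rw [h, mul_zero]
  have hrow : ∀ i : ℕ, i ≤ p → ∑ j, g1 j * (⇑D)^[i] (x j) = 0 := by
    intro i hi
    rcases lt_or_eq_of_le hi with hlt | heq
    · exact hg1S.2 ⟨i, hlt⟩
    · subst heq
      have h1 := hg1S.2 ⟨1, hp.one_lt⟩
      simp only [Function.iterate_one] at h1
      calc ∑ j, g1 j * (⇑D)^[i] (x j)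
          = ∑ j, g1 j * (α * D (x j)) :=
            Finset.sum_congr rfl fun j _ => by rw [hP]
        _ = α * ∑ j, g1 j * D (x j) := by
            rw [Finset.mul_sum]; exact Finset.sum_congr rfl fun j _ => by ring
        _ = 0 := by rw [h1, mul_zero]
  set g2 : Fin (p + 1) → K := fun j => D (g1 j) with hg2def
  have hg2row : ∀ i : Fin p, ∑ j, g2 j * (⇑D)^[(i : ℕ)] (x j) = 0 := by
    intro i
    have h0 := hrow i (le_of_lt i.2)
    have h1 := hrow ((i : ℕ) + 1) i.2
    have hD0 : ∑ j, D (g1 j * (⇑D)^[(i : ℕ)] (x j)) = 0 := by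
      rw [← map_sum, h0, map_zero]
    calc ∑ j, g2 j * (⇑D)^[(i : ℕ)] (x j)
        = ∑ j, (D (g1 j * (⇑D)^[(i : ℕ)] (x j)) - g1 j * (⇑D)^[(i : ℕ) + 1] (x j)) := by
          refine Finset.sum_congr rfl fun j _ => ?_
          rw [D.leibniz, smul_eq_mul, smul_eq_mul, Function.iterate_succ_apply']
          ring
      _ = (∑ j, D (g1 j * (⇑D)^[(i : ℕ)] (x j))) - ∑ j, g1 j * (⇑D)^[(i : ℕ) + 1] (x j) :=
          Finset.sum_sub_distrib _ _
      _ = 0 := by rw [hD0, h1, sub_zero]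
  by_cases hg2 : g2 = 0
  · refine ⟨g1, hg1S.1, fun j => congrFun hg2 j, ?_⟩
    have := hrow 0 (Nat.zero_le p)
    simpa using this
  · exfalso
    have hg2S : g2 ∈ S := ⟨hg2, hg2row⟩
    have hsubset : (Finset.univ.filter fun j => g2 j ≠ 0) ⊆
        Finset.univ.filter fun j => g1 j ≠ 0 := by
      intro j hj
      simp only [Finset.mem_filter, Finset.mem_univ, true_and] at hj ⊢
      intro h
      exact hj (by rw [hg2def]; show D (g1 j) = 0; rw [h, map_zero])
    have hj0mem : j0 ∈ Finset.univ.filter fun j => g1 j ≠ 0 := by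
      simp [hg1j0]
    have hj0nmem : j0 ∉ Finset.univ.filter fun j => g2 j ≠ 0 := by
      simp only [Finset.mem_filter, Finset.mem_univ, true_and, not_not]
      show D (g1 j0) = 0
      rw [hg1j0, Derivation.map_one_eq_zero]
    have hlt : c g2 < c g1 :=
      Finset.card_lt_card ((Finset.ssubset_iff_of_subset hsubset).mpr ⟨j0, hj0mem, hj0nmem⟩)
    have hcg1 : c g1 = c g := by
      simp only [hcdef]
      congr 1
      ext j
      simp [hg1def, hj0]
    have hle := hmin g2 hg2S
    omega

/-- If `D` is a nonzero `p`-closed `k`-linear derivation of a field `K` of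
characteristic `p > 0`, i.e. `D^p = α • D` for some `α ∈ K^D`, then the field
extension `K / K^D` is purely inseparable of degree `p`: `[K : K^D] = p`. -/
theorem finrank_constantField_of_pClosed
    (k K : Type*) [Field k] [Field K] [Algebra k K]
    (p : ℕ) [Fact p.Prime] [CharP k p]
    (D : Derivation k K K) (hD : D ≠ 0)
    (α : K) (hα : α ∈ constantField k K D)
    (hclosed : (D : K →ₗ[k] K) ^ p = α • (D : K →ₗ[k] K)) :
    Module.finrank (constantField k K D) K = p := by
  classical
  have hp : p.Prime := Fact.out
  haveI : CharP K p := charP_of_injective_algebraMap (algebraMap k K).injective p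
  have hP : ∀ y : K, (⇑D)^[p] y = α * D y := by
    intro y
    have h := LinearMap.ext_iff.mp hclosed y
    rw [Module.End.pow_apply] at h
    simpa using h
  obtain ⟨a, ha⟩ : ∃ a : K, D a ≠ 0 := by
    by_contra h
    push_neg at h
    exact hD (by ext y; simp [h])
  have hmem : ∀ y : K, y ∈ constantField k K D ↔ D y = 0 := fun y => Iff.rfl
  have haF : a ∉ constantField k K D := fun h => ha ((hmem a).mp h)
  have hapF : a ^ p ∈ constantField k K D := by
    rw [hmem]
    rw [D.leibniz_pow, nsmul_eq_mul, CharP.cast_eq_zero K p, zero_mul]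
  set F := constantField k K D with hFdef
  set c : F := ⟨a ^ p, hapF⟩ with hcdef
  have hirr : Irreducible (Polynomial.X ^ p - Polynomial.C c) := by
    refine X_pow_sub_C_irreducible_of_prime hp fun b hb => ?_
    apply haF
    have hbK : (b : K) ^ p = a ^ p := by
      have := congrArg (Subtype.val) hb
      simpa [hcdef] using this
    have hba : (b : K) = a := by
      have h2 : ((b : K) - a) ^ p = 0 := by
        rw [sub_pow_char, hbK, sub_self]
      exact sub_eq_zero.mp ((pow_eq_zero_iff hp.ne_zero).mp h2)
    rw [← hba]; exact b.2
  have hmonic : (Polynomial.X ^ p - Polynomial.C c).Monic :=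
    Polynomial.monic_X_pow_sub_C c hp.ne_zero
  have haev : Polynomial.aeval a (Polynomial.X ^ p - Polynomial.C c : Polynomial F) = 0 := by
    rw [map_sub, map_pow, Polynomial.aeval_X, Polynomial.aeval_C]
    show a ^ p - (c : K) = 0
    rw [hcdef, sub_self]
  have hmin : minpoly F a = Polynomial.X ^ p - Polynomial.C c :=
    (minpoly.eq_of_irreducible_of_monic hirr haev hmonic).symm
  have hdeg : (minpoly F a).natDegree = p := by
    rw [hmin, Polynomial.natDegree_X_pow_sub_C]
  have hli : LinearIndependent F (fun i : Fin p => a ^ (i : ℕ)) := by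
    have h := (linearIndependent_pow (K := F) a).comp
      (finCongr hdeg.symm) (finCongr hdeg.symm).injective
    convert h using 1
    ext i
    simp [Function.comp]
    rfl
  have hspan : ∀ y : K, y ∈ Submodule.span F (Set.range fun i : Fin p => a ^ (i : ℕ)) := by
    intro y
    obtain ⟨g, hgne, hgD, hgsum⟩ :=
      exists_const_relation hp D hP (Fin.snoc (fun i : Fin p => a ^ (i : ℕ)) y)
    rw [Fin.sum_univ_castSucc] at hgsum
    simp only [Fin.snoc_castSucc, Fin.snoc_last] at hgsum
    by_cases hlast : g (Fin.last p) = 0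
    · exfalso
      apply hgne
      rw [hlast, zero_mul, add_zero] at hgsum
      have hall := Fintype.linearIndependent_iff.mp hli
        (fun i => (⟨g i.castSucc, hgD i.castSucc⟩ : F)) ?_
      · funext j
        induction j using Fin.lastCases with
        | last => exact hlast
        | cast i => exact congrArg Subtype.val (hall i)
      · rw [← hgsum]
        exact Finset.sum_congr rfl fun i _ => rfl
    · have hy : y = ∑ i : Fin p, (-(g (Fin.last p))⁻¹ * g i.castSucc) * a ^ (i : ℕ) := by
        have h2 : g (Fin.last p) * y = -∑ i : Fin p, g i.castSucc * a ^ (i : ℕ) :=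
          eq_neg_of_add_eq_zero_right hgsum
        calc y = (g (Fin.last p))⁻¹ * (g (Fin.last p) * y) := by
              rw [← mul_assoc, inv_mul_cancel₀ hlast, one_mul]
          _ = (g (Fin.last p))⁻¹ * -∑ i : Fin p, g i.castSucc * a ^ (i : ℕ) := by rw [h2]
          _ = ∑ i : Fin p, (-(g (Fin.last p))⁻¹ * g i.castSucc) * a ^ (i : ℕ) := by
              rw [mul_neg, Finset.mul_sum, ← Finset.sum_neg_distrib]
              exact Finset.sum_congr rfl fun i _ => by ring
      rw [hy]
      refine Submodule.sum_mem _ fun i _ => ?_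
      have hcoef : (-(g (Fin.last p))⁻¹ * g i.castSucc) ∈ F :=
        F.mul_mem (F.neg_mem (F.inv_mem ((hmem _).mpr (hgD _)))) ((hmem _).mpr (hgD _))
      have : (-(g (Fin.last p))⁻¹ * g i.castSucc) * a ^ (i : ℕ)
          = (⟨_, hcoef⟩ : F) • a ^ (i : ℕ) := rfl
      rw [this]
      exact Submodule.smul_mem _ _ (Submodule.subset_span ⟨i, rfl⟩)
  let b : Module.Basis (Fin p) F K := Module.Basis.mk hli fun y _ => hspan y
  rw [Module.finrank_eq_card_basis b, Fintype.card_fin]
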